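/- arXiv:1711.08187 — 2 statements merged into one kernel-verified Lean document; each statement's English description precedes it below -/
import Mathlib

section
/- If y solves (p y')' = q f(x, y, y') on (0,1] with y(0⁺) = η₁, and the integrals below converge, then y satisfies the integral equation y(x) = η₁ + c₁ ∫₀ˣ ds/p(s) − ∫₀ˣ (1/p(s)) ∫ₛ¹ q(t) f(t, y(t), y'(t)) dt ds, where c₁ = p(1) y'(1). -/
open MeasureTheory intervalIntegral

/-- A solution of (p y')' = q f(x,y,y') with y(0⁺) = η₁ satisfies the integral equation
    y(x) = η₁ + c₁ ∫₀ˣ ds/p(s) − ∫₀ˣ (1/p(s)) ∫ₛ¹ q f dt ds, where c₁ = p(1) y'(1). -/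
theorem stmt_6 (p q y : ℝ → ℝ) (f : ℝ → ℝ → ℝ → ℝ) (η₁ : ℝ)
    (hp : ContDiffOn ℝ 1 p (Set.Ioc 0 1))
    (hp0 : ∀ s ∈ Set.Ioc (0:ℝ) 1, p s ≠ 0)
    (hq : IntegrableOn q (Set.Ioc 0 1))
    (hf : Continuous fun v : ℝ × ℝ × ℝ => f v.1 v.2.1 v.2.2)
    (hy : ∀ x ∈ Set.Ioc (0:ℝ) 1, DifferentiableAt ℝ y x ∧ DifferentiableAt ℝ (deriv y) x)
    (hode : ∀ x ∈ Set.Ioc (0:ℝ) 1,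
      deriv (fun u => p u * deriv y u) x = q x * f x (y x) (deriv y x))
    (hpint : IntegrableOn (fun s => 1 / p s) (Set.Ioc 0 1))
    (hLint : IntegrableOn
      (fun s => (1 / p s) * ∫ t in s..1, q t * f t (y t) (deriv y t)) (Set.Ioc 0 1))
    (hlim : Filter.Tendsto y (nhdsWithin 0 (Set.Ioi 0)) (nhds η₁)) :
    ∀ x ∈ Set.Ioc (0:ℝ) 1,
      y x = η₁ + p 1 * deriv y 1 * (∫ s in (0:ℝ)..x, 1 / p s)
        - ∫ s in (0:ℝ)..x, (1 / p s) * ∫ t in s..1, q t * f t (y t) (deriv y t) := by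
  intro x hx
  obtain ⟨hx0, hx1⟩ := hx
  set F : ℝ → ℝ := fun t => q t * f t (y t) (deriv y t) with hFdef
  set I : ℝ → ℝ := fun s => ∫ t in s..1, F t with hIdef
  set c₁ : ℝ := p 1 * deriv y 1 with hc₁
  -- continuity of the f-composition on Ioc 0 1
  have hycont : ContinuousOn y (Set.Ioc 0 1) :=
    fun t ht => ((hy t ht).1.continuousAt).continuousWithinAt
  have hy'cont : ContinuousOn (deriv y) (Set.Ioc 0 1) :=
    fun t ht => ((hy t ht).2.continuousAt).continuousWithinAt
  have hfcont : ContinuousOn (fun t => f t (y t) (deriv y t)) (Set.Ioc 0 1) := by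
    have : ContinuousOn (fun t : ℝ => ((t, y t, deriv y t) : ℝ × ℝ × ℝ)) (Set.Ioc 0 1) :=
      (continuousOn_id).prodMk (hycont.prodMk hy'cont)
    exact hf.comp_continuousOn this
  -- step 1: derivative formula for y'
  have hderiv_formula : ∀ s ∈ Set.Ioc (0:ℝ) 1,
      deriv y s = c₁ * (1 / p s) - (1 / p s) * I s := by
    intro s hs
    have hps := hp0 s hs
    have hFTC : ∫ t in s..1, F t
        = (fun u => p u * deriv y u) 1 - (fun u => p u * deriv y u) s := by
      apply integral_eq_sub_of_hasDeriv_right_of_le hs.2 (f := fun u => p u * deriv y u)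
      · -- continuity of p * y' on Icc s 1
        intro t ht
        have ht' : t ∈ Set.Ioc (0:ℝ) 1 := ⟨lt_of_lt_of_le hs.1 ht.1, ht.2⟩
        exact ((hp.continuousOn t ht').mono (fun u hu => ⟨lt_of_lt_of_le hs.1 hu.1, hu.2⟩)).mul
          ((hy'cont t ht').mono (fun u hu => ⟨lt_of_lt_of_le hs.1 hu.1, hu.2⟩))
      · intro t ht
        have ht' : t ∈ Set.Ioc (0:ℝ) 1 := ⟨lt_of_lt_of_le hs.1 ht.1.le |>.trans_le le_rfl, ht.2.le⟩
        have hnb : Set.Ioc (0:ℝ) 1 ∈ nhds t := Ioc_mem_nhds ht'.1 ht.2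
        have hpd : DifferentiableAt ℝ p t :=
          ((hp.contDiffAt hnb).differentiableAt one_ne_zero)
        have hd : DifferentiableAt ℝ (fun u => p u * deriv y u) t :=
          hpd.mul (hy t ht').2
        have := hd.hasDerivAt
        rw [hode t ht'] at this
        exact this.hasDerivWithinAt
      · -- interval integrability of F on [s,1]
        rw [intervalIntegrable_iff_integrableOn_Icc_of_le hs.2]
        exact (hq.mono_set (fun u hu => ⟨lt_of_lt_of_le hs.1 hu.1, hu.2⟩)).mul_continuousOn_of_subset
          (hfcont.mono (fun u hu => ⟨lt_of_lt_of_le hs.1 hu.1, hu.2⟩)) measurableSet_Icc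
          isCompact_Icc (le_refl _)
    simp only [] at hFTC
    have : I s = c₁ - p s * deriv y s := hFTC
    field_simp at this ⊢
    linarith [this]
  have hG : IntegrableOn (fun s => c₁ * (1 / p s) - (1 / p s) * I s) (Set.Ioc 0 1) :=
    (hpint.const_mul c₁).sub hLint
  -- step 2: integral identity on [a,x] for a ∈ (0,x)
  have key : ∀ a ∈ Set.Ioo (0:ℝ) x,
      y x = y a + c₁ * (∫ s in a..x, 1 / p s) - ∫ s in a..x, (1 / p s) * I s := by
    intro a ha
    have hax : a ≤ x := ha.2.le
    have hsub : Set.Icc a x ⊆ Set.Ioc 0 1 := fun u hu => ⟨ha.1.trans_le hu.1, hu.2.trans hx1⟩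
    have hint1 : IntervalIntegrable (fun s => 1 / p s) volume a x := by
      rw [intervalIntegrable_iff_integrableOn_Icc_of_le hax]
      exact hpint.mono_set hsub
    have hint2 : IntervalIntegrable (fun s => (1 / p s) * I s) volume a x := by
      rw [intervalIntegrable_iff_integrableOn_Icc_of_le hax]
      exact hLint.mono_set hsub
    have hFTC2 : ∫ s in a..x, deriv y s = y x - y a := by
      apply integral_eq_sub_of_hasDeriv_right_of_le hax (f := y)
      · exact hycont.mono hsub
      · intro t ht
        exact ((hy t (hsub (Set.mem_Icc_of_Ioo ht))).1.hasDerivAt).hasDerivWithinAt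
      · rw [intervalIntegrable_iff_integrableOn_Icc_of_le hax]
        apply IntegrableOn.congr_fun (hG.mono_set hsub) ?_ measurableSet_Icc
        intro u hu
        exact (hderiv_formula u (hsub hu)).symm
    have heq : ∫ s in a..x, deriv y s
        = c₁ * (∫ s in a..x, 1 / p s) - ∫ s in a..x, (1 / p s) * I s := by
      rw [← intervalIntegral.integral_const_mul,
        ← intervalIntegral.integral_sub (hint1.const_mul c₁) hint2]
      apply intervalIntegral.integral_congr
      intro u hu
      rw [Set.uIcc_of_le hax] at hu
      exact hderiv_formula u (hsub hu)
    rw [heq] at hFTC2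
    linarith
  -- step 3: limit as a → 0⁺
  have hIoo : Set.Ioo (0:ℝ) x ⊆ Set.Ioc 0 1 := fun u hu => ⟨hu.1, hu.2.le.trans hx1⟩
  have tendsto_prim : ∀ h : ℝ → ℝ, IntegrableOn h (Set.Ioc 0 1) →
      Filter.Tendsto (fun a => ∫ s in a..x, h s) (nhdsWithin 0 (Set.Ioo 0 x))
        (nhds (∫ s in (0:ℝ)..x, h s)) := by
    intro h hint
    have hIcc : IntegrableOn h (Set.Icc 0 1) := by
      rwa [integrableOn_Icc_iff_integrableOn_Ioc]
    have hcont : ContinuousOn (fun a => ∫ s in (0:ℝ)..a, h s) (Set.Icc 0 1) := by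
      have := intervalIntegral.continuousOn_primitive_interval
        (a := (0:ℝ)) (b := (1:ℝ)) (f := h) (μ := volume) ?_
      · simpa [Set.uIcc_of_le (by norm_num : (0:ℝ) ≤ 1)] using this
      · rwa [Set.uIcc_of_le (by norm_num : (0:ℝ) ≤ 1)]
    have h0 : Filter.Tendsto (fun a => ∫ s in (0:ℝ)..a, h s)
        (nhdsWithin 0 (Set.Ioo 0 x)) (nhds 0) := by
      have hc := (hcont 0 (Set.mem_Icc.2 ⟨le_rfl, by norm_num⟩))
      have : Filter.Tendsto (fun a => ∫ s in (0:ℝ)..a, h s)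
          (nhdsWithin 0 (Set.Icc 0 1)) (nhds (∫ s in (0:ℝ)..(0:ℝ), h s)) := hc
      simp only [intervalIntegral.integral_same] at this
      exact this.mono_left (nhdsWithin_mono 0
        (fun u hu => ⟨hu.1.le, hu.2.le.trans hx1⟩))
    have hsplit : ∀ a ∈ Set.Ioo (0:ℝ) x,
        (∫ s in a..x, h s) = (∫ s in (0:ℝ)..x, h s) - ∫ s in (0:ℝ)..a, h s := by
      intro a ha
      have i1 : IntervalIntegrable h volume 0 a := by
        rw [intervalIntegrable_iff_integrableOn_Ioc_of_le ha.1.le]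
        exact hint.mono_set (fun u hu => ⟨hu.1, hu.2.trans (ha.2.le.trans hx1)⟩)
      have i2 : IntervalIntegrable h volume a x := by
        rw [intervalIntegrable_iff_integrableOn_Ioc_of_le ha.2.le]
        exact hint.mono_set (fun u hu => ⟨ha.1.trans hu.1, hu.2.trans hx1⟩)
      have := intervalIntegral.integral_add_adjacent_intervals i1 i2
      linarith
    have : Filter.Tendsto (fun a => (∫ s in (0:ℝ)..x, h s) - ∫ s in (0:ℝ)..a, h s)
        (nhdsWithin 0 (Set.Ioo 0 x)) (nhds ((∫ s in (0:ℝ)..x, h s) - 0)) :=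
      Filter.Tendsto.sub tendsto_const_nhds h0
    rw [sub_zero] at this
    apply this.congr'
    filter_upwards [self_mem_nhdsWithin] with a ha
    exact (hsplit a ha).symm
  have neBot : (nhdsWithin (0:ℝ) (Set.Ioo 0 x)).NeBot := by
    exact left_nhdsWithin_Ioo_neBot hx0
  have hY : Filter.Tendsto y (nhdsWithin 0 (Set.Ioo 0 x)) (nhds η₁) :=
    hlim.mono_left (nhdsWithin_mono 0 (fun u hu => hu.1))
  have hRHS : Filter.Tendsto
      (fun a => y a + c₁ * (∫ s in a..x, 1 / p s) - ∫ s in a..x, (1 / p s) * I s)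
      (nhdsWithin 0 (Set.Ioo 0 x))
      (nhds (η₁ + c₁ * (∫ s in (0:ℝ)..x, 1 / p s)
        - ∫ s in (0:ℝ)..x, (1 / p s) * I s)) :=
    (hY.add ((tendsto_prim _ hpint).const_mul c₁)).sub (tendsto_prim _ hLint)
  have hLHS : Filter.Tendsto
      (fun a => y a + c₁ * (∫ s in a..x, 1 / p s) - ∫ s in a..x, (1 / p s) * I s)
      (nhdsWithin 0 (Set.Ioo 0 x)) (nhds (y x)) := by
    apply Filter.Tendsto.congr' _ tendsto_const_nhds
    filter_upwards [self_mem_nhdsWithin] with a ha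
    exact key a ha
  exact tendsto_nhds_unique hLHS hRHS
end

section
/- If y is a solution on (0,1] of (p y')' = q f(x,y,y') satisfying y(0⁺) = η₁ and α₁ y(1) + β₁ y'(1) = γ₁ with α₁ h(1) + β₁ h'(1) ≠ 0, where h(x) = ∫₀ˣ ds/p(s), then y satisfies y(x) = η₁ + (γ₁ − α₁ η₁) h(x)/(α₁ h(1) + β₁ h'(1)) + α₁ h(x)/(α₁ h(1) + β₁ h'(1)) · [L^{-1}(q f)]_{x=1} − L^{-1}(q f)(x), where L^{-1}g(x) = ∫₀ˣ (1/p(s)) ∫ₛ¹ g dt ds. -/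
open MeasureTheory intervalIntegral

/-- Integral equation for the mixed boundary value problem
    (p y')' = q f(x,y,y'), y(0⁺) = η₁, α₁ y(1) + β₁ y'(1) = γ₁. -/
theorem stmt_11 (p q y : ℝ → ℝ) (f : ℝ → ℝ → ℝ → ℝ) (η₁ α₁ β₁ γ₁ : ℝ)
    (hp : ContDiffOn ℝ 1 p (Set.Ioc 0 1))
    (hp0 : ∀ s ∈ Set.Ioc (0:ℝ) 1, p s ≠ 0)
    (hq : IntegrableOn q (Set.Ioc 0 1))
    (hf : Continuous fun v : ℝ × ℝ × ℝ => f v.1 v.2.1 v.2.2)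
    (hα₁ : 0 < α₁) (hβ₁ : 0 ≤ β₁)
    (hpint : IntegrableOn (fun s => 1 / p s) (Set.Ioc 0 1))
    (hden : α₁ * (∫ s in (0:ℝ)..1, 1 / p s) + β₁ * (1 / p 1) ≠ 0)
    (hy : ∀ x ∈ Set.Ioc (0:ℝ) 1, DifferentiableAt ℝ y x ∧ DifferentiableAt ℝ (deriv y) x)
    (hode : ∀ x ∈ Set.Ioc (0:ℝ) 1,
      deriv (fun u => p u * deriv y u) x = q x * f x (y x) (deriv y x))
    (hbc : α₁ * y 1 + β₁ * deriv y 1 = γ₁)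
    (hlim : Filter.Tendsto y (nhdsWithin 0 (Set.Ioi 0)) (nhds η₁))
    (hLint : IntegrableOn
      (fun s => (1 / p s) * ∫ t in s..1, q t * f t (y t) (deriv y t)) (Set.Ioc 0 1)) :
    ∀ x ∈ Set.Ioc (0:ℝ) 1,
      y x = η₁
        + (γ₁ - α₁ * η₁) * (∫ s in (0:ℝ)..x, 1 / p s)
            / (α₁ * (∫ s in (0:ℝ)..1, 1 / p s) + β₁ * (1 / p 1))
        + α₁ * (∫ s in (0:ℝ)..x, 1 / p s)
            / (α₁ * (∫ s in (0:ℝ)..1, 1 / p s) + β₁ * (1 / p 1))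
            * (∫ s in (0:ℝ)..1, (1 / p s) * ∫ t in s..1, q t * f t (y t) (deriv y t))
        - ∫ s in (0:ℝ)..x, (1 / p s) * ∫ t in s..1, q t * f t (y t) (deriv y t) := by
  set g : ℝ → ℝ := fun t => q t * f t (y t) (deriv y t) with hgdef
  set G : ℝ → ℝ := fun s => (1 / p s) * ∫ t in s..1, g t with hGdef
  set H : ℝ → ℝ := fun t => ∫ s in (0:ℝ)..t, 1 / p s with hHdef
  set L : ℝ → ℝ := fun t => ∫ s in (0:ℝ)..t, G s with hLdef
  set C : ℝ := p 1 * deriv y 1 with hCdef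
  -- continuity facts
  have hyc : ∀ u ∈ Set.Ioc (0:ℝ) 1, ContinuousAt y u :=
    fun u hu => (hy u hu).1.continuousAt
  have hy'c : ∀ u ∈ Set.Ioc (0:ℝ) 1, ContinuousAt (deriv y) u :=
    fun u hu => (hy u hu).2.continuousAt
  have hFc : ∀ u ∈ Set.Ioc (0:ℝ) 1, ContinuousAt (fun t => f t (y t) (deriv y t)) u := by
    intro u hu
    have h1 : ContinuousAt (fun t => ((t, y t, deriv y t) : ℝ × ℝ × ℝ)) u :=
      continuousAt_id.prodMk ((hyc u hu).prodMk (hy'c u hu))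
    exact hf.continuousAt.comp h1
  -- g is interval integrable on [a,1] for a ∈ (0,1]
  have hgint : ∀ a ∈ Set.Ioc (0:ℝ) 1, IntervalIntegrable g volume a 1 := by
    intro a ha
    have hsub : Set.uIcc a 1 ⊆ Set.Ioc 0 1 := by
      rw [Set.uIcc_of_le ha.2]
      exact fun t ht => ⟨lt_of_lt_of_le ha.1 ht.1, ht.2⟩
    have hqi : IntervalIntegrable q volume a 1 := (hq.mono_set hsub).intervalIntegrable
    exact hqi.mul_continuousOn (fun t ht => (hFc t (hsub ht)).continuousWithinAt)
  -- fundamental: p a * y'(a) = C - ∫ₐ¹ g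
  have keyC : ∀ a ∈ Set.Ioc (0:ℝ) 1, p a * deriv y a = C - ∫ t in a..1, g t := by
    intro a ha
    have hsubIcc : Set.Icc a 1 ⊆ Set.Ioc 0 1 :=
      fun t ht => ⟨lt_of_lt_of_le ha.1 ht.1, ht.2⟩
    have h1 : ∫ t in a..1, g t = p 1 * deriv y 1 - p a * deriv y a := by
      apply integral_eq_sub_of_hasDeriv_right_of_le (f := fun u => p u * deriv y u) ha.2
      · exact ContinuousOn.mul (hp.continuousOn.mono hsubIcc)
          (fun u hu => (hy'c u (hsubIcc hu)).continuousWithinAt)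
      · intro u hu
        have hu1 : u ∈ Set.Ioc (0:ℝ) 1 := ⟨lt_trans ha.1 hu.1, le_of_lt hu.2⟩
        have hmem : Set.Ioc (0:ℝ) 1 ∈ nhds u :=
          mem_nhds_iff.2 ⟨Set.Ioo 0 1, Set.Ioo_subset_Ioc_self, isOpen_Ioo, ⟨hu1.1, hu.2⟩⟩
        have hpd : DifferentiableAt ℝ p u :=
          ((hp.differentiableOn one_ne_zero) u hu1).differentiableAt hmem
        have hΦ : DifferentiableAt ℝ (fun u => p u * deriv y u) u := hpd.mul (hy u hu1).2
        have h2 := hΦ.hasDerivAt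
        rw [hode u hu1] at h2
        exact h2.hasDerivWithinAt
      · exact hgint a ha
    rw [h1, hCdef]; ring
  -- y'(u) = C * (1/p u) - G u
  have hderivy : ∀ u ∈ Set.Ioc (0:ℝ) 1, deriv y u = C * (1 / p u) - G u := by
    intro u hu
    have hpu := hp0 u hu
    have h := keyC u hu
    rw [hGdef]
    field_simp
    linarith [h]
  -- interval integrability of 1/p and G on subintervals of (0,1]
  have hHIcc : IntegrableOn (fun s => 1 / p s) (Set.Icc 0 1) :=
    (integrableOn_Icc_iff_integrableOn_Ioc (by simp)).2 hpint
  have hLIcc : IntegrableOn G (Set.Icc 0 1) :=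
    (integrableOn_Icc_iff_integrableOn_Ioc (by simp)).2 hLint
  have hHii : ∀ a b : ℝ, a ∈ Set.Icc (0:ℝ) 1 → b ∈ Set.Icc (0:ℝ) 1 →
      IntervalIntegrable (fun s => 1 / p s) volume a b := by
    intro a b ha hb
    have hs : Set.uIcc a b ⊆ Set.Icc 0 1 := by
      rw [← Set.uIcc_of_le (by norm_num : (0:ℝ) ≤ 1)]
      exact Set.uIcc_subset_uIcc
        (by rw [Set.uIcc_of_le (by norm_num : (0:ℝ) ≤ 1)]; exact ha)
        (by rw [Set.uIcc_of_le (by norm_num : (0:ℝ) ≤ 1)]; exact hb)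
    exact (hHIcc.mono_set hs).intervalIntegrable
  have hLii : ∀ a b : ℝ, a ∈ Set.Icc (0:ℝ) 1 → b ∈ Set.Icc (0:ℝ) 1 →
      IntervalIntegrable G volume a b := by
    intro a b ha hb
    have hs : Set.uIcc a b ⊆ Set.Icc 0 1 := by
      rw [← Set.uIcc_of_le (by norm_num : (0:ℝ) ≤ 1)]
      exact Set.uIcc_subset_uIcc
        (by rw [Set.uIcc_of_le (by norm_num : (0:ℝ) ≤ 1)]; exact ha)
        (by rw [Set.uIcc_of_le (by norm_num : (0:ℝ) ≤ 1)]; exact hb)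
    exact (hLIcc.mono_set hs).intervalIntegrable
  -- main identity with the constant C
  have main : ∀ x ∈ Set.Ioc (0:ℝ) 1, y x = η₁ + C * H x - L x := by
    intro x hx
    have hx0 : (0:ℝ) < x := hx.1
    have hIocx : Set.Ioc (0:ℝ) x ∈ nhdsWithin (0:ℝ) (Set.Ioi 0) :=
      Ioc_mem_nhdsGT hx0
    -- the identity for each a ∈ (0, x]
    have keyD : ∀ a ∈ Set.Ioc (0:ℝ) x,
        y x = y a + C * (H x - H a) - (L x - L a) := by
      intro a ha
      have ha1 : a ∈ Set.Ioc (0:ℝ) 1 := ⟨ha.1, le_trans ha.2 hx.2⟩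
      have hsub : Set.uIcc a x ⊆ Set.Ioc 0 1 := by
        rw [Set.uIcc_of_le ha.2]
        exact fun t ht => ⟨lt_of_lt_of_le ha.1 ht.1, le_trans ht.2 hx.2⟩
      have step1 : ∫ u in a..x, deriv y u = y x - y a := by
        apply integral_eq_sub_of_hasDerivAt
        · exact fun u hu => (hy u (hsub hu)).1.hasDerivAt
        · exact ContinuousOn.intervalIntegrable
            (fun u hu => (hy'c u (hsub hu)).continuousWithinAt)
      have haI : a ∈ Set.Icc (0:ℝ) 1 := ⟨le_of_lt ha1.1, ha1.2⟩
      have hxI : x ∈ Set.Icc (0:ℝ) 1 := ⟨le_of_lt hx.1, hx.2⟩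
      have h0I : (0:ℝ) ∈ Set.Icc (0:ℝ) 1 := ⟨le_refl 0, by norm_num⟩
      have step2 : ∫ u in a..x, deriv y u
          = C * (∫ u in a..x, 1 / p u) - ∫ u in a..x, G u := by
        rw [← intervalIntegral.integral_const_mul,
          ← intervalIntegral.integral_sub ((hHii a x haI hxI).const_mul C) (hLii a x haI hxI)]
        exact intervalIntegral.integral_congr fun u hu => hderivy u (hsub hu)
      have hHsplit : ∫ u in a..x, 1 / p u = H x - H a := by
        rw [hHdef]
        exact (intervalIntegral.integral_interval_sub_left (hHii 0 x h0I hxI)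
          (hHii 0 a h0I haI)).symm
      have hLsplit : ∫ u in a..x, G u = L x - L a := by
        rw [hLdef]
        exact (intervalIntegral.integral_interval_sub_left (hLii 0 x h0I hxI)
          (hLii 0 a h0I haI)).symm
      rw [step2, hHsplit, hLsplit] at step1
      linarith [step1]
    -- limits as a → 0⁺
    have hIcc_mem : Set.Icc (0:ℝ) 1 ∈ nhdsWithin (0:ℝ) (Set.Ioi 0) :=
      Filter.mem_of_superset (Ioc_mem_nhdsGT one_pos) Set.Ioc_subset_Icc_self
    have hle : nhdsWithin (0:ℝ) (Set.Ioi 0) ≤ nhdsWithin 0 (Set.Icc 0 1) :=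
      nhdsWithin_le_of_mem hIcc_mem
    have hHtend : Filter.Tendsto H (nhdsWithin 0 (Set.Ioi 0)) (nhds 0) := by
      have h1 : ContinuousOn H (Set.uIcc 0 1) := by
        rw [hHdef]
        exact continuousOn_primitive_interval
          (by rwa [Set.uIcc_of_le (by norm_num : (0:ℝ) ≤ 1)])
      have h2 := (h1.continuousWithinAt (by
        rw [Set.uIcc_of_le (by norm_num : (0:ℝ) ≤ 1)]; exact ⟨le_refl 0, by norm_num⟩)).tendsto
      rw [Set.uIcc_of_le (by norm_num : (0:ℝ) ≤ 1)] at h2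
      have h3 : H 0 = 0 := by rw [hHdef]; simp
      rw [h3] at h2
      exact h2.mono_left hle
    have hLtend : Filter.Tendsto L (nhdsWithin 0 (Set.Ioi 0)) (nhds 0) := by
      have h1 : ContinuousOn L (Set.uIcc 0 1) := by
        rw [hLdef]
        exact continuousOn_primitive_interval
          (by rwa [Set.uIcc_of_le (by norm_num : (0:ℝ) ≤ 1)])
      have h2 := (h1.continuousWithinAt (by
        rw [Set.uIcc_of_le (by norm_num : (0:ℝ) ≤ 1)]; exact ⟨le_refl 0, by norm_num⟩)).tendsto
      rw [Set.uIcc_of_le (by norm_num : (0:ℝ) ≤ 1)] at h2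
      have h3 : L 0 = 0 := by rw [hLdef]; simp
      rw [h3] at h2
      exact h2.mono_left hle
    have h1 : Filter.Tendsto (fun a => y a + C * (H x - H a) - (L x - L a))
        (nhdsWithin 0 (Set.Ioi 0)) (nhds (η₁ + C * (H x - 0) - (L x - 0))) :=
      (hlim.add (tendsto_const_nhds.mul (tendsto_const_nhds.sub hHtend))).sub
        (tendsto_const_nhds.sub hLtend)
    have heq : (fun a => y a + C * (H x - H a) - (L x - L a))
        =ᶠ[nhdsWithin (0:ℝ) (Set.Ioi 0)] fun _ => y x := by
      filter_upwards [hIocx] with a ha using (keyD a ha).symm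
    have h2 := tendsto_nhds_unique (h1.congr' heq) (tendsto_const_nhds (x := y x))
    rw [← h2]; ring
  -- determine C from the boundary condition
  have h1mem : (1:ℝ) ∈ Set.Ioc (0:ℝ) 1 := ⟨one_pos, le_refl 1⟩
  have hp1 : p 1 ≠ 0 := hp0 1 h1mem
  have hy1 : y 1 = η₁ + C * H 1 - L 1 := main 1 h1mem
  have hy'1 : deriv y 1 = C * (1 / p 1) := by
    rw [hCdef]; field_simp
  have hCval : C * (α₁ * H 1 + β₁ * (1 / p 1)) = γ₁ - α₁ * η₁ + α₁ * L 1 := by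
    rw [hy1, hy'1] at hbc
    linarith [hbc]
  have hC : C = (γ₁ - α₁ * η₁ + α₁ * L 1) / (α₁ * H 1 + β₁ * (1 / p 1)) := by
    rw [eq_div_iff hden]
    exact hCval
  -- conclude
  intro x hx
  rw [main x hx, hC]
  field_simp
  ring
end
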